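/- Let $p$ be a prime and $\ell \ge 1$, $0 \le k \le \ell - 1$. In the Burnside ring $R_\ell$ of $C_{p^\ell}$, any ideal $I$ with $J_{\ell,k+1}(0) \subseteq I \subseteq J_{\ell,k}(0)$ is of the form $I = J_{\ell,k+1}(0) + (n F_{\ell,k})$ for some $n \in \mathbb{Z}$, i.e., $I = (nF_{\ell,k}, F_{\ell,k+1}, \ldots, F_{\ell,\ell-1})$. -/
import Mathlib


/-! We model the Burnside ring of the cyclic group `C_{p^ℓ}` via its (injective) mark
homomorphism: `Xe p ℓ i` is the vector of marks of the transitive `C_{p^ℓ}`-set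
`C_{p^ℓ}/C_{p^i}`, namely `j ↦ #(fixed points of C_{p^j})`, stabilized for `j ≥ ℓ`.
The Burnside ring `BR p ℓ` is the subring of `ℕ → ℤ` generated by these mark vectors. -/

/-- Marks of the basis element `X_{ℓ,i} = [C_{p^ℓ}/C_{p^i}]`. -/
def Xe (p l i : ℕ) : ℕ → ℤ := fun j => if min j l ≤ i then (p : ℤ) ^ (l - i) else 0

/-- The Burnside ring of `C_{p^ℓ}`, realized as a subring of the ghost ring `ℕ → ℤ`. -/
def BR (p l : ℕ) : Subring (ℕ → ℤ) := Subring.closure (Set.range (Xe p l))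

/-- The basis element `X_{ℓ,i}` as an element of the Burnside ring. -/
def Xb (p l i : ℕ) : BR p l := ⟨Xe p l i, Subring.subset_closure ⟨i, rfl⟩⟩

/-- `F_{ℓ,i} = X_{ℓ,i} - p^{ℓ-i}` in the Burnside ring. -/
def Fb (p l i : ℕ) : BR p l := Xb p l i - (p : BR p l) ^ (l - i)

/-- `F_{ℓ,i} = X_{ℓ,i} - p^{ℓ-i}` as a mark vector. -/
def Fe (p l i : ℕ) : ℕ → ℤ := Xe p l i - (p : ℕ → ℤ) ^ (l - i)

/-- Restriction `res^ℓ_k` to the subgroup `C_{p^k}` on mark vectors: truncation of marks. -/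
def resA (k : ℕ) : (ℕ → ℤ) →+* (ℕ → ℤ) :=
  Pi.ringHom fun j => Pi.evalRingHom (fun _ => ℤ) (min j k)

/-- Additive transfer (induction) `ind^{m+1}_m` on mark vectors. -/
def indA (p m : ℕ) (a : ℕ → ℤ) : ℕ → ℤ := fun j => if j ≤ m then p * a j else 0

/-- Multiplicative transfer (norm) `jnd^{m+1}_m` on mark vectors. -/
def jndA (p m : ℕ) (a : ℕ → ℤ) : ℕ → ℤ := fun j => if j ≤ m then (a j) ^ p else a m

/-- The ideal `J_{ℓ,k}(x) = (x, F_{ℓ,k}, …, F_{ℓ,ℓ-1})` of the Burnside ring. -/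
def Jb (p l k : ℕ) (x : ℤ) : Ideal (BR p l) :=
  Ideal.span (insert (x : BR p l) (Fb p l '' Set.Ico k l))

lemma Fb_coe (p l i : ℕ) : ((Fb p l i : BR p l) : ℕ → ℤ) = Fe p l i := by
  simp [Fb, Fe, Xb]

lemma Fe_apply (p l i j : ℕ) :
    Fe p l i j = (if min j l ≤ i then (p:ℤ) ^ (l - i) else 0) - (p:ℤ) ^ (l - i) := by
  simp [Fe, Xe]

lemma Fb_l (p l : ℕ) : Fb p l l = 0 := by
  apply Subtype.ext
  rw [Fb_coe]
  funext j
  rw [Fe_apply]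
  simp [min_le_right j l]

lemma Xe_min (p l j : ℕ) : Xe p l j = Xe p l (min j l) := by
  funext m
  simp only [Xe]
  rcases le_total j l with h | h
  · rw [min_eq_left h]
  · rw [min_eq_right h]
    have h1 : min m l ≤ j := le_trans (min_le_right _ _) h
    simp [h1, min_le_right m l, Nat.sub_eq_zero_of_le h]

lemma Xe_mul_Fe_of_le (p l i j : ℕ) (h : j ≤ i) : Xe p l j * Fe p l i = 0 := by
  funext m
  simp only [Pi.mul_apply, Pi.zero_apply, Xe, Fe_apply]
  split_ifs with h1 h2 h2 <;> first | omega | ring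

lemma Xe_mul_Fe_of_lt (p l i j : ℕ) (h : i < j) (hj : j ≤ l) :
    Xe p l j * Fe p l i =
      (p:ℤ) ^ (l - j) • Fe p l i - (p:ℤ) ^ (l - i) • Fe p l j := by
  funext m
  simp only [Pi.mul_apply, Pi.sub_apply, Pi.smul_apply, smul_eq_mul, Xe, Fe_apply]
  split_ifs with h1 h2 h2 <;> first | omega | ring

/-- The ℤ-span of the generators `F_{ℓ,i}`, `k ≤ i < ℓ`. -/
def Sk (p l k : ℕ) : Submodule ℤ (BR p l) := Submodule.span ℤ (Fb p l '' Set.Ico k l)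

lemma Xb_mul_Fb_mem (p l k j i : ℕ) (hi : i ∈ Set.Ico k l) :
    Xb p l j * Fb p l i ∈ Sk p l k := by
  obtain ⟨hki, hil⟩ := hi
  rcases le_or_gt j i with h | h
  · have hz : Xb p l j * Fb p l i = 0 := by
      apply Subtype.ext
      push_cast [Fb_coe]
      exact Xe_mul_Fe_of_le p l i j h
    rw [hz]; exact zero_mem _
  · have hij' : i < min j l := lt_min h hil
    have key : Xb p l j * Fb p l i =
        (p:ℤ) ^ (l - min j l) • Fb p l i - (p:ℤ) ^ (l - i) • Fb p l (min j l) := by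
      apply Subtype.ext
      push_cast [Fb_coe]
      have : (Xb p l j : ℕ → ℤ) = Xe p l (min j l) := Xe_min p l j
      rw [this]
      exact Xe_mul_Fe_of_lt p l i (min j l) hij' (min_le_right _ _)
    rw [key]
    apply Submodule.sub_mem
    · exact Submodule.smul_mem _ _ (Submodule.subset_span ⟨i, ⟨hki, hil⟩, rfl⟩)
    · rcases lt_or_eq_of_le (min_le_right j l) with hlt | heq
      · exact Submodule.smul_mem _ _
          (Submodule.subset_span ⟨min j l, ⟨le_trans hki (le_of_lt hij'), hlt⟩, rfl⟩)
      · rw [heq, Fb_l, smul_zero]; exact zero_mem _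

lemma mul_gen (p l k : ℕ) (r : BR p l) (h : ∀ i ∈ Set.Ico k l, r * Fb p l i ∈ Sk p l k) :
    ∀ x ∈ Sk p l k, r * x ∈ Sk p l k := by
  intro x hx
  induction hx using Submodule.span_induction with
  | mem y hy => obtain ⟨i, hi, rfl⟩ := hy; exact h i hi
  | zero => rw [mul_zero]; exact zero_mem _
  | add a b _ _ ha hb => rw [mul_add]; exact add_mem ha hb
  | smul c a _ ha => rw [mul_smul_comm]; exact Submodule.smul_mem _ _ ha

lemma mul_Fb_mem (p l k : ℕ) (r : BR p l) (i : ℕ) (hi : i ∈ Set.Ico k l) :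
    r * Fb p l i ∈ Sk p l k := by
  let T : Subring (BR p l) :=
    { carrier := {r : BR p l | ∀ i ∈ Set.Ico k l, r * Fb p l i ∈ Sk p l k}
      one_mem' := by
        intro i hi; rw [one_mul]; exact Submodule.subset_span ⟨i, hi, rfl⟩
      mul_mem' := by
        intro a b ha hb i hi
        rw [mul_assoc]; exact mul_gen p l k a ha _ (hb i hi)
      add_mem' := by
        intro a b ha hb i hi
        rw [add_mul]; exact add_mem (ha i hi) (hb i hi)
      zero_mem' := by
        intro i hi; rw [zero_mul]; exact zero_mem _
      neg_mem' := by
        intro a ha i hi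
        rw [neg_mul]; exact neg_mem (ha i hi) }
  suffices hr : r ∈ T from hr i hi
  have hmap : Subring.closure (Set.range (Xe p l)) ≤ T.map (BR p l).subtype := by
    rw [Subring.closure_le]
    rintro _ ⟨j, rfl⟩
    exact ⟨Xb p l j, fun i hi => Xb_mul_Fb_mem p l k j i hi, rfl⟩
  obtain ⟨t, ht, hte⟩ := hmap r.2
  exact (Subtype.ext (hte : (t : ℕ → ℤ) = r)) ▸ ht

/-- `Sk` as an ideal. -/
def Ik (p l k : ℕ) : Ideal (BR p l) where
  carrier := Sk p l k
  add_mem' := fun ha hb => add_mem ha hb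
  zero_mem' := zero_mem _
  smul_mem' := fun c x hx =>
    mul_gen p l k c (fun i hi => mul_Fb_mem p l k c i hi) x hx

lemma Jb_eq_Ik (p l k : ℕ) : Jb p l k 0 = Ik p l k := by
  apply le_antisymm
  · rw [Jb, Ideal.span_le]
    rintro x (rfl | ⟨i, hi, rfl⟩)
    · simpa using (zero_mem (Ik p l k))
    · exact Submodule.subset_span ⟨i, hi, rfl⟩
  · intro x hx
    have : Sk p l k ≤ (Jb p l k 0).restrictScalars ℤ := by
      rw [Sk, Submodule.span_le]
      exact fun y hy => Ideal.subset_span (Set.mem_insert_of_mem _ hy)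
    exact this hx

lemma mem_Jb_iff (p l k : ℕ) (x : BR p l) : x ∈ Jb p l k 0 ↔ x ∈ Sk p l k := by
  rw [Jb_eq_Ik]; rfl

/-- Evaluation of marks at index `k`, as an additive map. -/
def ev (p l k : ℕ) : BR p l →+ ℤ :=
  ((Pi.evalRingHom (fun _ => ℤ) k).comp (BR p l).subtype).toAddMonoidHom

lemma ev_apply (p l k : ℕ) (x : BR p l) : ev p l k x = (x : ℕ → ℤ) k := rfl

lemma ev_Fb (p l k i : ℕ) (hk : k ≤ l) :
    ev p l k (Fb p l i) = if k ≤ i then 0 else -(p:ℤ) ^ (l - i) := by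
  rw [ev_apply, Fb_coe, Fe_apply, min_eq_left hk]
  split_ifs <;> ring

lemma ev_zero_on_Sk (p l k : ℕ) (hk : k ≤ l) {s : BR p l} (hs : s ∈ Sk p l k) :
    ev p l k s = 0 := by
  induction hs using Submodule.span_induction with
  | mem y hy =>
    obtain ⟨i, ⟨hi1, _⟩, rfl⟩ := hy
    rw [ev_Fb p l k i hk, if_pos hi1]
  | zero => exact map_zero _
  | add a b _ _ ha hb => rw [map_add, ha, hb, add_zero]
  | smul c a _ ha => rw [map_zsmul, ha, smul_zero]

lemma exists_rep (p l k : ℕ) (hkl : k < l) {x : BR p l} (hx : x ∈ Sk p l k) :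
    ∃ n : ℤ, ∃ s : BR p l, s ∈ Sk p l (k+1) ∧ x = n • Fb p l k + s := by
  have hIco : Set.Ico k l = insert k (Set.Ico (k+1) l) := by
    ext m; simp only [Set.mem_Ico, Set.mem_insert_iff]; omega
  rw [Sk, hIco, Set.image_insert_eq, Submodule.mem_span_insert] at hx
  obtain ⟨n, s, hs, hx⟩ := hx
  exact ⟨n, s, hs, hx⟩

lemma ev_rep (p l k : ℕ) (hkl : k < l) (n : ℤ) {s : BR p l} (hs : s ∈ Sk p l (k+1)) :
    ev p l (k+1) (n • Fb p l k + s) = n * (-(p:ℤ) ^ (l - k)) := by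
  rw [map_add, map_zsmul, ev_zero_on_Sk p l (k+1) hkl hs,
    ev_Fb p l (k+1) k hkl, if_neg (by omega), add_zero, smul_eq_mul]

/-- Any ideal `I` of `R_ℓ` with `J_{ℓ,k+1}(0) ⊆ I ⊆ J_{ℓ,k}(0)` is of the form
`I = J_{ℓ,k+1}(0) + (n F_{ℓ,k})` for some `n ∈ ℤ`. -/
theorem ideal_between_J0 (p l k : ℕ) (hp : p.Prime) (hl : 1 ≤ l) (hk : k ≤ l - 1)
    (I : Ideal (BR p l)) (h1 : Jb p l (k+1) 0 ≤ I) (h2 : I ≤ Jb p l k 0) :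
    ∃ n : ℤ, I = Jb p l (k+1) 0 ⊔ Ideal.span {n • Fb p l k} := by
  have hkl : k < l := by omega
  have hP : (-(p:ℤ) ^ (l - k)) ≠ 0 :=
    neg_ne_zero.2 (pow_ne_zero _ (by exact_mod_cast hp.ne_zero))
  obtain ⟨m, hm⟩ := Int.subgroup_cyclic (AddSubgroup.map (ev p l (k+1)) I.toAddSubgroup)
  have hmmem : m ∈ AddSubgroup.map (ev p l (k+1)) I.toAddSubgroup := by
    rw [hm]; exact AddSubgroup.subset_closure rfl
  obtain ⟨y, hyI, hye⟩ := hmmem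
  obtain ⟨n₀, s, hs, hy⟩ := exists_rep p l k hkl ((mem_Jb_iff p l k y).1 (h2 hyI))
  have hevy : ev p l (k+1) y = n₀ * (-(p:ℤ) ^ (l - k)) := by
    rw [hy]; exact ev_rep p l k hkl n₀ hs
  refine ⟨n₀, le_antisymm ?_ ?_⟩
  · intro x hx
    obtain ⟨n', s', hs', hx'⟩ := exists_rep p l k hkl ((mem_Jb_iff p l k x).1 (h2 hx))
    have hevx : ev p l (k+1) x = n' * (-(p:ℤ) ^ (l - k)) := by
      rw [hx']; exact ev_rep p l k hkl n' hs'
    have hxH : ev p l (k+1) x ∈ AddSubgroup.closure ({m} : Set ℤ) := by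
      rw [← hm]; exact ⟨x, hx, rfl⟩
    obtain ⟨c, hc⟩ := AddSubgroup.mem_closure_singleton.1 hxH
    have hcn : n' = c * n₀ := by
      apply mul_right_cancel₀ hP
      rw [← hevx, ← hc, smul_eq_mul, ← hye, hevy]; ring
    have hx2 : x = (↑c : BR p l) * (n₀ • Fb p l k) + s' := by
      rw [hx', hcn, ← zsmul_eq_mul, smul_smul]
    rw [hx2]
    exact Submodule.add_mem _
      (Submodule.mem_sup_right (Ideal.mul_mem_left _ _ (Ideal.subset_span rfl)))
      (Submodule.mem_sup_left ((mem_Jb_iff p l (k+1) s').2 hs'))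
  · apply sup_le h1
    rw [Ideal.span_le, Set.singleton_subset_iff]
    have : n₀ • Fb p l k = y - s := by rw [hy]; ring
    rw [SetLike.mem_coe, this]
    exact Submodule.sub_mem _ hyI (h1 ((mem_Jb_iff p l (k+1) s).2 hs))
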